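/- Let Δ ≠ 0 and let P : ℝ × ℝ → ℝ satisfy P(x,μ) = x + 2μ + Δx² + R(x,μ), where on some neighborhood of (0,0) the map x ↦ P(x,μ) is C¹ and for some C > 0: |R(x,μ)| ≤ C(|x|³ + |μ||x|) and |∂R/∂x(x,μ)| ≤ C(x² + |μ|). Then there exist μ₀ > 0 and a function x₀, defined for all μ with Δμ < 0 and |μ| < μ₀, such that x₀(μ) > 0, P(x₀(μ), μ) = x₀(μ), x₀(μ)/√(−2μ/Δ) → 1 as μ → 0 with Δμ < 0, and moreover: if Δ < 0 then 0 < ∂P/∂x(x₀(μ), μ) < 1 (the fixed point is attracting), while if Δ > 0 then ∂P/∂x(x₀(μ), μ) > 1 (the fixed point is repelling), for all such μ. -/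

import Mathlib

private lemma II2_half_le (s K x : ℝ) (hs : 0 < s) (hKs : K * s ≤ 1 / 2)
    (hx : s * (1 - K * s) ≤ x) : s / 2 ≤ x := by nlinarith

private lemma II2_le_two (s K x : ℝ) (hs : 0 < s) (hK0 : 0 ≤ K * s)
    (hx : x ≤ s * (1 + K * s)) (hKs : K * s ≤ 1 / 2) : x ≤ 2 * s := by nlinarith

private lemma II2_Rbd (C A B s x m : ℝ) (hC : 0 < C) (hs : 0 < s)
    (hB : B = C * (8 + A)) (hx2 : x ≤ 2 * s) (hxpos : 0 < x) (hm : 0 ≤ m)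
    (hmA : 2 * m = A * s ^ 2) : C * (x ^ 3 + m * x) ≤ B * s ^ 3 := by
  have hq : (0:ℝ) ≤ 4 * s ^ 2 + 2 * s * x + x ^ 2 := by nlinarith [mul_pos hs hxpos]
  have h1 : x ^ 3 ≤ 8 * s ^ 3 := by
    nlinarith [mul_nonneg (by linarith : (0:ℝ) ≤ 2 * s - x) hq]
  have h2 : m * x ≤ A * s ^ 3 := by nlinarith [mul_le_mul_of_nonneg_left hx2 hm]
  have h3 := mul_le_mul_of_nonneg_left h1 hC.le
  have h4 := mul_le_mul_of_nonneg_left h2 hC.le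
  rw [hB]
  nlinarith

private lemma II2_sign_pos_hi (Δ B K s Rv : ℝ) (hB : 0 < B) (hs : 0 < s)
    (hK : 0 < K * s) (hKΔ : K * Δ = 2 * B) (hR : -(B * s ^ 3) ≤ Rv) :
    0 < Δ * ((s * (1 + K * s)) ^ 2 - s ^ 2) + Rv := by
  have h1 : Δ * ((s * (1 + K * s)) ^ 2 - s ^ 2)
      = 2 * (K * Δ) * s ^ 3 + (K * Δ) * (K * s) * s ^ 3 := by ring
  rw [h1, hKΔ]
  nlinarith [mul_pos (mul_pos hB hK) (pow_pos hs 3)]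

private lemma II2_sign_pos_lo (Δ B K s Rv : ℝ) (hB : 0 < B) (hs : 0 < s)
    (hK : 0 < K * s) (hKΔ : K * Δ = 2 * B) (hKs : K * s ≤ 1 / 2)
    (hR : Rv ≤ B * s ^ 3) :
    Δ * ((s * (1 - K * s)) ^ 2 - s ^ 2) + Rv < 0 := by
  have h1 : Δ * ((s * (1 - K * s)) ^ 2 - s ^ 2)
      = -(2 * (K * Δ) * s ^ 3) + (K * Δ) * (K * s) * s ^ 3 := by ring
  rw [h1, hKΔ]
  nlinarith [mul_pos hB (pow_pos hs 3), mul_pos (mul_pos hB hK) (pow_pos hs 3)]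

private lemma II2_sign_neg_hi (Δ B K s Rv : ℝ) (hB : 0 < B) (hs : 0 < s)
    (hK : 0 < K * s) (hKΔ : K * Δ = -(2 * B)) (hR : Rv ≤ B * s ^ 3) :
    Δ * ((s * (1 + K * s)) ^ 2 - s ^ 2) + Rv < 0 := by
  have h1 : Δ * ((s * (1 + K * s)) ^ 2 - s ^ 2)
      = 2 * (K * Δ) * s ^ 3 + (K * Δ) * (K * s) * s ^ 3 := by ring
  rw [h1, hKΔ]
  nlinarith [mul_pos (mul_pos hB hK) (pow_pos hs 3)]

private lemma II2_sign_neg_lo (Δ B K s Rv : ℝ) (hB : 0 < B) (hs : 0 < s)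
    (hK : 0 < K * s) (hKΔ : K * Δ = -(2 * B)) (hKs : K * s ≤ 1 / 2)
    (hR : -(B * s ^ 3) ≤ Rv) :
    0 < Δ * ((s * (1 - K * s)) ^ 2 - s ^ 2) + Rv := by
  have h1 : Δ * ((s * (1 - K * s)) ^ 2 - s ^ 2)
      = -(2 * (K * Δ) * s ^ 3) + (K * Δ) * (K * s) * s ^ 3 := by ring
  rw [h1, hKΔ]
  nlinarith [mul_pos hB (pow_pos hs 3), mul_pos (mul_pos hB hK) (pow_pos hs 3)]

private lemma II2_dRbd (C A D s x m : ℝ) (hC : 0 < C) (hs : 0 < s)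
    (hD : D = C * (4 + A / 2)) (hx1 : 0 < x) (hx2 : x ≤ 2 * s) (hm : 0 ≤ m)
    (hmA : 2 * m = A * s ^ 2) : C * (x ^ 2 + m) ≤ D * s ^ 2 := by
  have h1 : x ^ 2 ≤ 4 * s ^ 2 := by
    nlinarith [mul_nonneg (by linarith : (0:ℝ) ≤ 2 * s - x) (by linarith : (0:ℝ) ≤ 2 * s + x)]
  have h2 := mul_le_mul_of_nonneg_left h1 hC.le
  rw [hD]
  nlinarith

private lemma II2_deriv_pos (Δ A D s x dR : ℝ) (hΔ : 0 < Δ) (hA : A = Δ)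
    (hs : 0 < s) (hl : s / 2 ≤ x) (hdr : |dR| ≤ D * s ^ 2) (hsD : D * s ≤ A / 2) :
    1 < 1 + 2 * Δ * x + dR := by
  have h1 := (abs_le.mp hdr).1
  have h2 : D * s ^ 2 ≤ A / 2 * s := by
    nlinarith [mul_le_mul_of_nonneg_right hsD hs.le]
  have h3 : A * s ≤ 2 * Δ * x := by
    nlinarith [mul_nonneg hΔ.le (by linarith : (0:ℝ) ≤ 2 * x - s)]
  have h4 : 0 < A * s := mul_pos (by linarith) hs
  linarith

private lemma II2_deriv_neg (Δ A D s x dR : ℝ) (hΔ : Δ < 0) (hA : A = -Δ)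
    (hD : 0 < D) (hs : 0 < s) (hs1 : s < 1) (hl : s / 2 ≤ x) (hu : x ≤ 2 * s)
    (hdr : |dR| ≤ D * s ^ 2) (hsD : D * s ≤ A / 2) (hsE : 16 * A * s ≤ 1)
    (hsF : 4 * D * s ≤ 1) :
    0 < 1 + 2 * Δ * x + dR ∧ 1 + 2 * Δ * x + dR < 1 := by
  have hApos : 0 < A := by linarith
  have h1 := abs_le.mp hdr
  have h2 : D * s ^ 2 ≤ A / 2 * s := by
    nlinarith [mul_le_mul_of_nonneg_right hsD hs.le]
  have h8 : D * s ^ 2 ≤ 1 / 4 := by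
    nlinarith [mul_le_mul_of_nonneg_right (show D * s ≤ 1 / 4 by linarith) hs.le]
  have h9 : 4 * A * s ≤ 1 / 4 := by linarith
  constructor
  · have h7 : -(4 * A * s) ≤ 2 * Δ * x := by
      nlinarith [mul_le_mul_of_nonneg_left hu (by linarith : (0:ℝ) ≤ 2 * A)]
    linarith [h1.1]
  · have h7 : 2 * Δ * x ≤ -(A * s) := by
      nlinarith [mul_le_mul_of_nonneg_left (show s ≤ 2 * x by linarith) hApos.le]
    have h10 : 0 < A / 2 * s := by positivity
    linarith [h1.2]

private lemma II2_absbd (s K x : ℝ) (hs : 0 < s) (h1 : s * (1 - K * s) ≤ x)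
    (h2 : x ≤ s * (1 + K * s)) : |x - s| ≤ K * s * s := by
  rw [abs_le]
  constructor <;> nlinarith

set_option maxHeartbeats 1000000 in
/-- Fixed points of the Poincaré map `P(x,μ) = x + 2μ + Δx² + O(x³ + μx)` of the
invisible two-fold `II₂`: for `Δμ < 0` small there is a fixed point
`x₀(μ) ≈ √(−2μ/Δ) > 0`, attracting if `Δ < 0` and repelling if `Δ > 0`. -/
theorem pws_limit_cycles_II2
    (Δ : ℝ) (hΔ : Δ ≠ 0) (P R : ℝ → ℝ → ℝ)
    (hPR : ∀ x μ : ℝ, P x μ = x + 2 * μ + Δ * x ^ 2 + R x μ)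
    (r C : ℝ) (hr : 0 < r) (hC : 0 < C)
    (hP1 : ∀ μ : ℝ, |μ| < r → ContDiffOn ℝ 1 (fun x => P x μ) (Set.Ioo (-r) r))
    (hRb : ∀ x μ : ℝ, |x| < r → |μ| < r → |R x μ| ≤ C * (|x| ^ 3 + |μ| * |x|))
    (hRd : ∀ x μ : ℝ, |x| < r → |μ| < r →
      |deriv (fun x' => R x' μ) x| ≤ C * (x ^ 2 + |μ|)) :
    ∃ μ₀ > 0, ∃ x₀ : ℝ → ℝ,
      (∀ μ : ℝ, Δ * μ < 0 → |μ| < μ₀ →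
        0 < x₀ μ ∧
        P (x₀ μ) μ = x₀ μ ∧
        (Δ < 0 → 0 < deriv (fun x => P x μ) (x₀ μ) ∧
          deriv (fun x => P x μ) (x₀ μ) < 1) ∧
        (0 < Δ → 1 < deriv (fun x => P x μ) (x₀ μ))) ∧
      Filter.Tendsto (fun μ : ℝ => x₀ μ / Real.sqrt (-2 * μ / Δ))
        (nhdsWithin 0 {μ : ℝ | Δ * μ < 0}) (nhds 1) := by
  classical
  obtain ⟨A, hA⟩ : ∃ A : ℝ, A = |Δ| := ⟨_, rfl⟩
  have hApos : 0 < A := hA ▸ abs_pos.mpr hΔ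
  obtain ⟨B, hB⟩ : ∃ B : ℝ, B = C * (8 + A) := ⟨_, rfl⟩
  have hBpos : 0 < B := by rw [hB]; positivity
  obtain ⟨K, hK⟩ : ∃ K : ℝ, K = 2 * B / A := ⟨_, rfl⟩
  have hKpos : 0 < K := by rw [hK]; positivity
  obtain ⟨D, hD⟩ : ∃ D : ℝ, D = C * (4 + A / 2) := ⟨_, rfl⟩
  have hDpos : 0 < D := by rw [hD]; positivity
  obtain ⟨s₁, hs₁⟩ : ∃ s₁ : ℝ, s₁ = min (min (min 1 (r / 2)) (min (1 / (2 * K)) (A / (2 * D))))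
      (min (1 / (16 * A)) (1 / (4 * D))) := ⟨_, rfl⟩
  have hs₁pos : 0 < s₁ := by rw [hs₁]; positivity
  have hs₁a : s₁ ≤ 1 := hs₁ ▸
    le_trans (min_le_left _ _) (le_trans (min_le_left _ _) (min_le_left _ _))
  have hs₁b : s₁ ≤ r / 2 := hs₁ ▸
    le_trans (min_le_left _ _) (le_trans (min_le_left _ _) (min_le_right _ _))
  have hs₁c : s₁ ≤ 1 / (2 * K) := hs₁ ▸
    le_trans (min_le_left _ _) (le_trans (min_le_right _ _) (min_le_left _ _))
  have hs₁d : s₁ ≤ A / (2 * D) := hs₁ ▸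
    le_trans (min_le_left _ _) (le_trans (min_le_right _ _) (min_le_right _ _))
  have hs₁e : s₁ ≤ 1 / (16 * A) := hs₁ ▸ le_trans (min_le_right _ _) (min_le_left _ _)
  have hs₁f : s₁ ≤ 1 / (4 * D) := hs₁ ▸ le_trans (min_le_right _ _) (min_le_right _ _)
  obtain ⟨μ₀, hμ₀⟩ : ∃ μ₀ : ℝ, μ₀ = min (A * s₁ ^ 2 / 2) (r / 2) := ⟨_, rfl⟩
  have hμ₀pos : 0 < μ₀ := by rw [hμ₀]; positivity
  have hμ₀a : μ₀ ≤ A * s₁ ^ 2 / 2 := hμ₀ ▸ min_le_left _ _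
  have hμ₀b : μ₀ ≤ r / 2 := hμ₀ ▸ min_le_right _ _
  have key : ∀ μ : ℝ, Δ * μ < 0 → |μ| < μ₀ → ∃ x : ℝ,
      (0 < x ∧ P x μ = x ∧
        (Δ < 0 → 0 < deriv (fun x => P x μ) x ∧ deriv (fun x => P x μ) x < 1) ∧
        (0 < Δ → 1 < deriv (fun x => P x μ) x)) ∧
      |x / Real.sqrt (-2 * μ / Δ) - 1| ≤ K * Real.sqrt (-2 * μ / Δ) := by
    intro μ hμΔ hμs
    have hμr : |μ| < r := lt_of_lt_of_le hμs (le_trans hμ₀b (by linarith))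
    have hm : 0 < -2 * μ / Δ := by
      rcases lt_or_gt_of_ne hΔ with h | h
      · have hμpos : 0 < μ := by nlinarith
        exact div_pos_of_neg_of_neg (by nlinarith) h
      · have hμneg : μ < 0 := by nlinarith
        exact div_pos (by nlinarith) h
    obtain ⟨s, hsdef⟩ : ∃ s : ℝ, s = Real.sqrt (-2 * μ / Δ) := ⟨_, rfl⟩
    rw [← hsdef]
    have hs0 : 0 < s := hsdef ▸ Real.sqrt_pos.mpr hm
    have hss : s ^ 2 = -2 * μ / Δ := hsdef ▸ Real.sq_sqrt hm.le
    have hΔs : Δ * s ^ 2 = -2 * μ := by rw [hss]; field_simp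
    have hμA : 2 * |μ| = A * s ^ 2 := by
      have h1 : |Δ * s ^ 2| = |(-2 : ℝ) * μ| := by rw [hΔs]
      rw [abs_mul, abs_of_nonneg (sq_nonneg s), abs_mul] at h1
      rw [hA]; rw [h1]; norm_num
    have hsA : s < s₁ := by
      have h3 : A * s ^ 2 < A * s₁ ^ 2 := by
        have h4 := lt_of_lt_of_le hμs hμ₀a
        linarith [hμA]
      have h4 : s ^ 2 < s₁ ^ 2 := (mul_lt_mul_iff_right₀ hApos).mp h3
      exact lt_of_pow_lt_pow_left₀ 2 hs₁pos.le h4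
    have hεhalf : K * s ≤ 1 / 2 := by
      have h5 : s ≤ 1 / (2 * K) := (lt_of_lt_of_le hsA hs₁c).le
      have h6 := mul_le_mul_of_nonneg_left h5 hKpos.le
      calc K * s ≤ K * (1 / (2 * K)) := h6
        _ = 1 / 2 := by field_simp
    have hs1lt : s < 1 := lt_of_lt_of_le hsA hs₁a
    have hsr : 2 * s < r := by
      have := lt_of_lt_of_le hsA hs₁b; linarith
    have hε0 : 0 < K * s := mul_pos hKpos hs0
    have hxlxu : s * (1 - K * s) ≤ s * (1 + K * s) :=
      mul_le_mul_of_nonneg_left (by linarith) hs0.le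
    -- bound on R on the interval
    have hRbd : ∀ x ∈ Set.Icc (s * (1 - K * s)) (s * (1 + K * s)), |R x μ| ≤ B * s ^ 3 := by
      intro x hx
      have hx1 : s / 2 ≤ x := II2_half_le s K x hs0 hεhalf hx.1
      have hx2 : x ≤ 2 * s := II2_le_two s K x hs0 hε0.le hx.2 hεhalf
      have hxpos : 0 < x := by linarith
      have hxr : |x| < r := by rw [abs_of_pos hxpos]; linarith
      have h := hRb x μ hxr hμr
      rw [abs_of_pos hxpos] at h
      exact le_trans h (II2_Rbd C A B s x |μ| hC hs0 hB hx2 hxpos (abs_nonneg μ) hμA)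
    have hfeq : ∀ x : ℝ, P x μ - x = Δ * (x ^ 2 - s ^ 2) + R x μ := by
      intro x
      rw [hPR]
      linear_combination hΔs
    have hIccIoo : Set.Icc (s * (1 - K * s)) (s * (1 + K * s)) ⊆ Set.Ioo (-r) r := by
      intro x hx
      have hx1 : s / 2 ≤ x := II2_half_le s K x hs0 hεhalf hx.1
      have hx2 : x ≤ 2 * s := II2_le_two s K x hs0 hε0.le hx.2 hεhalf
      exact ⟨by linarith, by linarith⟩
    have hfc : ContinuousOn (fun x => P x μ - x) (Set.Icc (s * (1 - K * s)) (s * (1 + K * s))) :=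
      (((hP1 μ hμr).continuousOn).mono hIccIoo).sub continuousOn_id
    have hKΔabs : K * A = 2 * B := by rw [hK]; field_simp
    have hRlo := hRbd (s * (1 - K * s)) ⟨le_rfl, hxlxu⟩
    have hRhi := hRbd (s * (1 + K * s)) ⟨hxlxu, le_rfl⟩
    have hRlo1 := abs_le.mp hRlo
    have hRhi1 := abs_le.mp hRhi
    have hmain : ∃ x₀ ∈ Set.Icc (s * (1 - K * s)) (s * (1 + K * s)), P x₀ μ - x₀ = 0 := by
      rcases lt_or_gt_of_ne hΔ with hΔneg | hΔpos
      · -- Δ < 0 : f(xu) < 0 ≤ f(xl)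
        have hAeq : A = -Δ := hA ▸ abs_of_neg hΔneg
        have hKΔ : K * Δ = -(2 * B) := by rw [hAeq] at hKΔabs; linarith
        have hfu : P (s * (1 + K * s)) μ - s * (1 + K * s) ≤ 0 := by
          rw [hfeq]
          exact (II2_sign_neg_hi Δ B K s _ hBpos hs0 hε0 hKΔ hRhi1.2).le
        have hfl : 0 ≤ P (s * (1 - K * s)) μ - s * (1 - K * s) := by
          rw [hfeq]
          exact (II2_sign_neg_lo Δ B K s _ hBpos hs0 hε0 hKΔ hεhalf hRlo1.1).le
        obtain ⟨x₀, hx₀mem, hx₀⟩ := intermediate_value_Icc' hxlxu hfc ⟨hfu, hfl⟩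
        exact ⟨x₀, hx₀mem, hx₀⟩
      · -- Δ > 0 : f(xl) ≤ 0 ≤ f(xu)
        have hAeq : A = Δ := hA ▸ abs_of_pos hΔpos
        have hKΔ : K * Δ = 2 * B := by rw [hAeq] at hKΔabs; linarith
        have hfu : 0 ≤ P (s * (1 + K * s)) μ - s * (1 + K * s) := by
          rw [hfeq]
          exact (II2_sign_pos_hi Δ B K s _ hBpos hs0 hε0 hKΔ hRhi1.1).le
        have hfl : P (s * (1 - K * s)) μ - s * (1 - K * s) ≤ 0 := by
          rw [hfeq]
          exact (II2_sign_pos_lo Δ B K s _ hBpos hs0 hε0 hKΔ hεhalf hRlo1.2).le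
        obtain ⟨x₀, hx₀mem, hx₀⟩ := intermediate_value_Icc hxlxu hfc ⟨hfl, hfu⟩
        exact ⟨x₀, hx₀mem, hx₀⟩
    obtain ⟨x₀, hx₀mem, hfx₀⟩ := hmain
    have hx₀l : s / 2 ≤ x₀ := II2_half_le s K x₀ hs0 hεhalf hx₀mem.1
    have hx₀u : x₀ ≤ 2 * s := II2_le_two s K x₀ hs0 hε0.le hx₀mem.2 hεhalf
    have hx₀pos : 0 < x₀ := by linarith
    have hfix : P x₀ μ = x₀ := by linarith [hfx₀]
    have hx₀Ioo : x₀ ∈ Set.Ioo (-r) r := ⟨by linarith, by linarith⟩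
    have hPdiff : DifferentiableAt ℝ (fun x => P x μ) x₀ :=
      (((hP1 μ hμr).differentiableOn one_ne_zero).differentiableAt
        (isOpen_Ioo.mem_nhds hx₀Ioo))
    have hpoly : HasDerivAt (fun x : ℝ => x + 2 * μ + Δ * x ^ 2) (1 + 2 * Δ * x₀) x₀ := by
      have h1 : HasDerivAt (fun x : ℝ => x + 2 * μ) 1 x₀ := (hasDerivAt_id x₀).add_const (2 * μ)
      have h2 : HasDerivAt (fun x : ℝ => Δ * x ^ 2) (Δ * (2 * x₀)) x₀ := by
        simpa using (hasDerivAt_pow 2 x₀).const_mul Δ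
      have h3 := h1.add h2
      rw [show (1:ℝ) + 2 * Δ * x₀ = 1 + Δ * (2 * x₀) by ring]
      exact h3
    have hReq : (fun x => R x μ) = fun x => P x μ - (x + 2 * μ + Δ * x ^ 2) :=
      funext fun x => by rw [hPR]; ring
    have hRder : HasDerivAt (fun x => R x μ)
        (deriv (fun x => P x μ) x₀ - (1 + 2 * Δ * x₀)) x₀ := by
      rw [hReq]; exact hPdiff.hasDerivAt.sub hpoly
    have hderiv : deriv (fun x => P x μ) x₀
        = 1 + 2 * Δ * x₀ + deriv (fun x => R x μ) x₀ := by
      rw [hRder.deriv]; ring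
    have hx₀r : |x₀| < r := by rw [abs_of_pos hx₀pos]; linarith
    have hdR := hRd x₀ μ hx₀r hμr
    have hdR2 : |deriv (fun x' => R x' μ) x₀| ≤ D * s ^ 2 :=
      le_trans hdR (II2_dRbd C A D s x₀ |μ| hC hs0 hD hx₀pos hx₀u (abs_nonneg μ) hμA)
    have hsD : D * s ≤ A / 2 := by
      have h5 : s ≤ A / (2 * D) := (lt_of_lt_of_le hsA hs₁d).le
      have h6 := mul_le_mul_of_nonneg_left h5 hDpos.le
      calc D * s ≤ D * (A / (2 * D)) := h6
        _ = A / 2 := by field_simp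
    have hsE : 16 * A * s ≤ 1 := by
      have h5 : s ≤ 1 / (16 * A) := (lt_of_lt_of_le hsA hs₁e).le
      have h6 := mul_le_mul_of_nonneg_left h5 (by positivity : (0:ℝ) ≤ 16 * A)
      calc 16 * A * s ≤ 16 * A * (1 / (16 * A)) := h6
        _ = 1 := by field_simp
    have hsF : 4 * D * s ≤ 1 := by
      have h5 : s ≤ 1 / (4 * D) := (lt_of_lt_of_le hsA hs₁f).le
      have h6 := mul_le_mul_of_nonneg_left h5 (by positivity : (0:ℝ) ≤ 4 * D)
      calc 4 * D * s ≤ 4 * D * (1 / (4 * D)) := h6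
        _ = 1 := by field_simp
    refine ⟨x₀, ⟨hx₀pos, hfix, ?_, ?_⟩, ?_⟩
    · intro hΔneg
      have hAeq : A = -Δ := hA ▸ abs_of_neg hΔneg
      rw [hderiv]
      exact II2_deriv_neg Δ A D s x₀ _ hΔneg hAeq hDpos hs0 hs1lt hx₀l hx₀u hdR2 hsD hsE hsF
    · intro hΔpos
      have hAeq : A = Δ := hA ▸ abs_of_pos hΔpos
      rw [hderiv]
      exact II2_deriv_pos Δ A D s x₀ _ hΔpos hAeq hs0 hx₀l hdR2 hsD
    · have h1 : x₀ / s - 1 = (x₀ - s) / s := by field_simp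
      rw [h1, abs_div, abs_of_pos hs0, div_le_iff₀ hs0]
      exact II2_absbd s K x₀ hs0 hx₀mem.1 hx₀mem.2
  -- assemble the function
  refine ⟨μ₀, hμ₀pos, fun μ =>
      if h : Δ * μ < 0 ∧ |μ| < μ₀ then (key μ h.1 h.2).choose else 1, ?_, ?_⟩
  · intro μ h1 h2
    have hch := (key μ h1 h2).choose_spec
    simp only [dif_pos (show Δ * μ < 0 ∧ |μ| < μ₀ from ⟨h1, h2⟩)]
    exact ⟨hch.1.1, hch.1.2.1, hch.1.2.2.1, hch.1.2.2.2⟩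
  · have hsq : Filter.Tendsto (fun μ : ℝ => Real.sqrt (-2 * μ / Δ))
        (nhdsWithin 0 {μ : ℝ | Δ * μ < 0}) (nhds 0) := by
      have hc0 : Continuous fun μ : ℝ => -2 * μ / Δ :=
        (continuous_const.mul continuous_id).div_const Δ
      have hc : Continuous fun μ : ℝ => Real.sqrt (-2 * μ / Δ) :=
        Real.continuous_sqrt.comp hc0
      have h0 := hc.tendsto 0
      have h0' : Real.sqrt (-2 * (0:ℝ) / Δ) = 0 := by norm_num
      rw [h0'] at h0
      exact h0.mono_left nhdsWithin_le_nhds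
    have hev1 : ∀ᶠ μ in nhdsWithin (0:ℝ) {μ : ℝ | Δ * μ < 0}, Δ * μ < 0 :=
      eventually_mem_nhdsWithin
    have hev2 : ∀ᶠ μ in nhdsWithin (0:ℝ) {μ : ℝ | Δ * μ < 0}, |μ| < μ₀ := by
      have h3 : ∀ᶠ μ in nhds (0:ℝ), |μ| < μ₀ := by
        filter_upwards [Metric.ball_mem_nhds (0:ℝ) hμ₀pos] with μ hμ
        simpa [Real.dist_eq] using hμ
      exact h3.filter_mono nhdsWithin_le_nhds
    have hbd : ∀ᶠ μ in nhdsWithin (0:ℝ) {μ : ℝ | Δ * μ < 0},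
        |(if h : Δ * μ < 0 ∧ |μ| < μ₀ then (key μ h.1 h.2).choose else 1)
          / Real.sqrt (-2 * μ / Δ) - 1| ≤ K * Real.sqrt (-2 * μ / Δ) := by
      filter_upwards [hev1, hev2] with μ h1 h2
      have hch := (key μ h1 h2).choose_spec
      simp only [dif_pos (show Δ * μ < 0 ∧ |μ| < μ₀ from ⟨h1, h2⟩)]
      exact hch.2
    have hK0 : Filter.Tendsto (fun μ : ℝ => K * Real.sqrt (-2 * μ / Δ))
        (nhdsWithin 0 {μ : ℝ | Δ * μ < 0}) (nhds 0) := by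
      simpa using hsq.const_mul K
    have hsub : Filter.Tendsto (fun μ : ℝ =>
        (if h : Δ * μ < 0 ∧ |μ| < μ₀ then (key μ h.1 h.2).choose else 1)
          / Real.sqrt (-2 * μ / Δ) - 1) (nhdsWithin 0 {μ : ℝ | Δ * μ < 0}) (nhds 0) := by
      have hneg : Filter.Tendsto (fun μ : ℝ => -(K * Real.sqrt (-2 * μ / Δ)))
          (nhdsWithin 0 {μ : ℝ | Δ * μ < 0}) (nhds 0) := by simpa using hK0.neg
      refine tendsto_of_tendsto_of_tendsto_of_le_of_le' hneg hK0 ?_ ?_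
      · filter_upwards [hbd] with μ h
        linarith [(abs_le.mp h).1]
      · filter_upwards [hbd] with μ h
        linarith [(abs_le.mp h).2]
    have hfin := hsub.add_const 1
    simpa using hfin
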